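/- Let M be a real symmetric n×n matrix in block-diagonal form with blocks M₁ (size n₁) and M₂ (size n₂), where Mᵢ𝟙 = μᵢ𝟙 (constant row sums μᵢ). Then for any real γ, det(xI − M − γJ) · (x − μ₁)(x − μ₂) = det(xI − M₁) · det(xI − M₂) · [(x − μ₁ − γn₁)(x − μ₂ − γn₂) − γ²n₁n₂]. -/

import Mathlib

open Matrix Polynomial BigOperators

private lemma eval_charpoly' {m : Type*} [Fintype m] [DecidableEq m]
    (N : Matrix m m ℝ) (x : ℝ) :
    (N.charpoly).eval x = (x • (1 : Matrix m m ℝ) - N).det := by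
  rw [Matrix.charpoly, ← Polynomial.coe_evalRingHom, RingHom.map_det]
  congr 1
  ext i j
  by_cases h : i = j <;>
    simp [Matrix.charmatrix_apply, Matrix.one_apply, h, Matrix.diagonal_apply]

private lemma core {n₁ n₂ : ℕ}
    (M₁ : Matrix (Fin n₁) (Fin n₁) ℝ) (M₂ : Matrix (Fin n₂) (Fin n₂) ℝ)
    (μ₁ μ₂ γ x : ℝ)
    (hrow₁ : M₁ *ᵥ (fun _ => (1 : ℝ)) = μ₁ • (fun _ => (1 : ℝ)))
    (hrow₂ : M₂ *ᵥ (fun _ => (1 : ℝ)) = μ₂ • (fun _ => (1 : ℝ)))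
    (hdet : (x • (1 : Matrix (Fin n₁ ⊕ Fin n₂) (Fin n₁ ⊕ Fin n₂) ℝ) -
        Matrix.fromBlocks M₁ 0 0 M₂).det ≠ 0)
    (h1 : x ≠ μ₁) (h2 : x ≠ μ₂) :
    (x • (1 : Matrix (Fin n₁ ⊕ Fin n₂) (Fin n₁ ⊕ Fin n₂) ℝ) -
        Matrix.fromBlocks M₁ 0 0 M₂ - γ • Matrix.of fun _ _ => (1 : ℝ)).det *
        ((x - μ₁) * (x - μ₂)) =
      (x • (1 : Matrix (Fin n₁) (Fin n₁) ℝ) - M₁).det *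
        (x • (1 : Matrix (Fin n₂) (Fin n₂) ℝ) - M₂).det *
        ((x - μ₁ - γ * n₁) * (x - μ₂ - γ * n₂) - γ ^ 2 * n₁ * n₂) := by
  have hd1 : x - μ₁ ≠ 0 := sub_ne_zero.mpr h1
  have hd2 : x - μ₂ ≠ 0 := sub_ne_zero.mpr h2
  set A : Matrix (Fin n₁ ⊕ Fin n₂) (Fin n₁ ⊕ Fin n₂) ℝ :=
    x • 1 - Matrix.fromBlocks M₁ 0 0 M₂ with hA
  have hAblock : A = Matrix.fromBlocks (x • 1 - M₁) 0 0 (x • 1 - M₂) := by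
    rw [hA, ← Matrix.fromBlocks_one, Matrix.fromBlocks_smul]
    ext i j
    cases i <;> cases j <;>
      simp [Matrix.fromBlocks, Matrix.sub_apply]
  have hdetA : A.det = (x • (1 : Matrix (Fin n₁) (Fin n₁) ℝ) - M₁).det *
      (x • (1 : Matrix (Fin n₂) (Fin n₂) ℝ) - M₂).det := by
    rw [hAblock, Matrix.det_fromBlocks_zero₂₁]
  have hAunit : IsUnit A.det := isUnit_iff_ne_zero.mpr hdet
  -- the eigen-like vector
  set w : Fin n₁ ⊕ Fin n₂ → ℝ :=
    Sum.elim (fun _ => (x - μ₁)⁻¹) (fun _ => (x - μ₂)⁻¹) with hw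
  have hb1 : (x • (1 : Matrix (Fin n₁) (Fin n₁) ℝ) - M₁) *ᵥ (fun _ => (x - μ₁)⁻¹) =
      fun _ => (1 : ℝ) := by
    have e1 : (fun _ : Fin n₁ => (x - μ₁)⁻¹) = (x - μ₁)⁻¹ • (fun _ => (1 : ℝ)) := by
      funext i; simp
    rw [e1, Matrix.mulVec_smul, Matrix.sub_mulVec, Matrix.smul_mulVec,
      Matrix.one_mulVec, hrow₁]
    funext j
    simp only [Pi.smul_apply, Pi.sub_apply, smul_eq_mul, mul_one]
    field_simp
  have hb2 : (x • (1 : Matrix (Fin n₂) (Fin n₂) ℝ) - M₂) *ᵥ (fun _ => (x - μ₂)⁻¹) =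
      fun _ => (1 : ℝ) := by
    have e2 : (fun _ : Fin n₂ => (x - μ₂)⁻¹) = (x - μ₂)⁻¹ • (fun _ => (1 : ℝ)) := by
      funext i; simp
    rw [e2, Matrix.mulVec_smul, Matrix.sub_mulVec, Matrix.smul_mulVec,
      Matrix.one_mulVec, hrow₂]
    funext j
    simp only [Pi.smul_apply, Pi.sub_apply, smul_eq_mul, mul_one]
    field_simp
  have heig : A *ᵥ w = fun _ => 1 := by
    rw [hAblock, hw, Matrix.fromBlocks_mulVec]
    funext i
    cases i with
    | inl i => simp [hb1]
    | inr i => simp [hb2]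
  have hwinv : A⁻¹ *ᵥ (fun _ => (1 : ℝ)) = w := by
    rw [← heig, Matrix.mulVec_mulVec, Matrix.nonsing_inv_mul A hAunit, Matrix.one_mulVec]
  -- rank one update
  have hJeq : A - γ • Matrix.of (fun _ _ => (1 : ℝ)) =
      A + Matrix.replicateCol Unit (fun _ => -γ) * Matrix.replicateRow Unit (fun _ => (1 : ℝ)) := by
    ext i j
    simp [Matrix.mul_apply, Matrix.sub_apply, Matrix.add_apply, sub_eq_add_neg]
  have hMDL := Matrix.det_add_replicateCol_mul_replicateRow (ι := Unit) hAunit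
      (fun _ => -γ) (fun _ => (1 : ℝ))
  have hsmall : (1 + Matrix.replicateRow Unit (fun _ : Fin n₁ ⊕ Fin n₂ => (1 : ℝ)) * A⁻¹ *
      Matrix.replicateCol Unit (fun _ : Fin n₁ ⊕ Fin n₂ => -γ)).det =
      1 - γ * ((n₁ : ℝ) * (x - μ₁)⁻¹ + (n₂ : ℝ) * (x - μ₂)⁻¹) := by
    have hcol : A⁻¹ * Matrix.replicateCol Unit (fun _ : Fin n₁ ⊕ Fin n₂ => -γ) =
        Matrix.replicateCol Unit (A⁻¹ *ᵥ (fun _ : Fin n₁ ⊕ Fin n₂ => -γ)) := (Matrix.replicateCol_mulVec (ι := Unit) _ _).symm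
    have hvec : A⁻¹ *ᵥ (fun _ => -γ) = (-γ) • w := by
      have : (fun _ : Fin n₁ ⊕ Fin n₂ => -γ) = (-γ) • (fun _ => (1 : ℝ)) := by
        funext i; simp
      rw [this, Matrix.mulVec_smul, hwinv]
    rw [Matrix.mul_assoc, hcol, hvec, Matrix.det_unique, Matrix.add_apply,
      Matrix.one_apply_eq, Matrix.replicateRow_mul_replicateCol_apply]
    have : (fun _ : Fin n₁ ⊕ Fin n₂ => (1 : ℝ)) ⬝ᵥ ((-γ) • w) =
        -γ * ((n₁ : ℝ) * (x - μ₁)⁻¹ + (n₂ : ℝ) * (x - μ₂)⁻¹) := by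
      simp only [dotProduct, Pi.smul_apply, smul_eq_mul, one_mul, hw]
      rw [Fintype.sum_sum_type]
      simp [Finset.sum_const, mul_add, Finset.mul_sum]
      ring
    rw [this]
    ring
  rw [hJeq, hMDL, hsmall, hdetA]
  have key : (1 - γ * ((n₁ : ℝ) * (x - μ₁)⁻¹ + (n₂ : ℝ) * (x - μ₂)⁻¹)) *
      ((x - μ₁) * (x - μ₂)) =
      (x - μ₁ - γ * n₁) * (x - μ₂ - γ * n₂) - γ ^ 2 * n₁ * n₂ := by
    field_simp
    ring
  rw [mul_assoc, key]

/-- For `M = diag(M₁, M₂)` block diagonal with real symmetric blocks having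
constant row sums `μ₁, μ₂`, and any real `γ`,
`det(xI − M − γJ)·(x − μ₁)(x − μ₂)
  = det(xI − M₁)·det(xI − M₂)·[(x − μ₁ − γn₁)(x − μ₂ − γn₂) − γ²n₁n₂]`. -/
theorem stmt5 {n₁ n₂ : ℕ}
    (M₁ : Matrix (Fin n₁) (Fin n₁) ℝ) (hsymm₁ : M₁.IsSymm)
    (M₂ : Matrix (Fin n₂) (Fin n₂) ℝ) (hsymm₂ : M₂.IsSymm)
    (μ₁ μ₂ γ : ℝ)
    (hrow₁ : M₁ *ᵥ (fun _ => (1 : ℝ)) = μ₁ • (fun _ => (1 : ℝ)))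
    (hrow₂ : M₂ *ᵥ (fun _ => (1 : ℝ)) = μ₂ • (fun _ => (1 : ℝ)))
    (M J : Matrix (Fin n₁ ⊕ Fin n₂) (Fin n₁ ⊕ Fin n₂) ℝ)
    (hM : M = Matrix.fromBlocks M₁ 0 0 M₂)
    (hJ : J = Matrix.of fun _ _ => (1 : ℝ)) :
    ∀ x : ℝ,
      (x • (1 : Matrix (Fin n₁ ⊕ Fin n₂) (Fin n₁ ⊕ Fin n₂) ℝ) - M - γ • J).det *
          ((x - μ₁) * (x - μ₂)) =
        (x • (1 : Matrix (Fin n₁) (Fin n₁) ℝ) - M₁).det *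
          (x • (1 : Matrix (Fin n₂) (Fin n₂) ℝ) - M₂).det *
          ((x - μ₁ - γ * n₁) * (x - μ₂ - γ * n₂) - γ ^ 2 * n₁ * n₂) := by
  subst hM hJ
  intro x
  -- reduce to a polynomial identity
  set MM : Matrix (Fin n₁ ⊕ Fin n₂) (Fin n₁ ⊕ Fin n₂) ℝ := Matrix.fromBlocks M₁ 0 0 M₂
    with hMM
  set P : ℝ[X] := (MM + γ • Matrix.of fun _ _ => (1 : ℝ)).charpoly *
      ((X - C μ₁) * (X - C μ₂)) with hP
  set Q : ℝ[X] := M₁.charpoly * M₂.charpoly *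
      ((X - C μ₁ - C (γ * n₁)) * (X - C μ₂ - C (γ * n₂)) - C (γ ^ 2 * n₁ * n₂)) with hQ
  have hPQ : P = Q := by
    apply Polynomial.eq_of_infinite_eval_eq
    set χ : ℝ[X] := MM.charpoly * ((X - C μ₁) * (X - C μ₂)) with hχ
    have hχne : χ ≠ 0 := by
      apply mul_ne_zero (MM.charpoly_monic.ne_zero)
      exact mul_ne_zero (Polynomial.X_sub_C_ne_zero μ₁) (Polynomial.X_sub_C_ne_zero μ₂)
    apply Set.Infinite.mono (s := {x : ℝ | ¬ χ.IsRoot x})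
    · intro y hy
      simp only [Set.mem_setOf_eq, Polynomial.IsRoot, hχ] at hy
      simp only [Polynomial.eval_mul, Polynomial.eval_sub, Polynomial.eval_X,
        Polynomial.eval_C, mul_eq_zero, not_or] at hy
      obtain ⟨hd, h1, h2⟩ := hy
      have hdet : (y • (1 : Matrix (Fin n₁ ⊕ Fin n₂) (Fin n₁ ⊕ Fin n₂) ℝ) - MM).det ≠ 0 := by
        rw [← eval_charpoly' MM y]; exact hd
      have h1' : y ≠ μ₁ := fun h => h1 (by rw [h]; ring)
      have h2' : y ≠ μ₂ := fun h => h2 (by rw [h]; ring)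
      have hc := core M₁ M₂ μ₁ μ₂ γ y hrow₁ hrow₂ (by rw [hMM] at hdet; exact hdet) h1' h2'
      simp only [Set.mem_setOf_eq, hP, hQ, Polynomial.eval_mul, Polynomial.eval_sub,
        Polynomial.eval_X, Polynomial.eval_C, Polynomial.eval_pow]
      rw [eval_charpoly', eval_charpoly', eval_charpoly']
      rw [sub_sub] at hc
      exact hc
    · have hfin : {x : ℝ | χ.IsRoot x}.Finite := Polynomial.finite_setOf_isRoot hχne
      have := hfin.infinite_compl
      simpa [Set.compl_setOf] using this
  have hev := congrArg (Polynomial.eval x) hPQ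
  simp only [hP, hQ, Polynomial.eval_mul, Polynomial.eval_sub, Polynomial.eval_X,
    Polynomial.eval_C, Polynomial.eval_pow] at hev
  rw [eval_charpoly', eval_charpoly', eval_charpoly'] at hev
  rw [sub_add_eq_sub_sub] at hev
  exact hev
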